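/- There exist ε > 0 and C > 0 such that for every Δt ∈ (0, ε), the quantities C̃(Δt) := (1−ρΔt)(β(Δt)(1−φ(Δt))(A(Δt)+γΔt) + φ(Δt)(1−λ(Δt)β(Δt))) and D(Δt) := (1−ρΔt)B(Δt)σ_S²/(2ρ) satisfy |C̃(Δt) − (3√2/4)·γ^{1/2}(σ_K/σ_S)^{1/2}·√Δt| ≤ C·Δt and |D(Δt) − (σ_Sσ_K/(2ρ) − (√2/8)·γ^{1/2}σ_S^{1/2}σ_K^{3/2}·√Δt/ρ)| ≤ C·Δt. -/

import Mathlib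

set_option maxHeartbeats 3200000

private lemma stmt5_root_exu (k γ ρ t : ℝ) (hk : 0 < k) (hγ : 0 < γ) (hρ : 0 < ρ)
    (ht : 0 < t) (ht1 : ρ * t < 1) :
    ∃ β ∈ Set.Ioc 0 k,
      ((1 - ρ * t) * β ^ 4 - (2 - ρ * t + β * γ * t) * k ^ 2 * β ^ 2
        + k ^ 4 * (1 - β * γ * t) = 0) ∧
      ∀ b ∈ Set.Ioc 0 k,
        (1 - ρ * t) * b ^ 4 - (2 - ρ * t + b * γ * t) * k ^ 2 * b ^ 2
          + k ^ 4 * (1 - b * γ * t) = 0 → b = β := by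
  set F : ℝ → ℝ := fun b => (1 - ρ * t) * b ^ 4 - (2 - ρ * t + b * γ * t) * k ^ 2 * b ^ 2
        + k ^ 4 * (1 - b * γ * t) with hF
  have hcont : Continuous F := by fun_prop
  have hF0 : F 0 = k ^ 4 := by simp [hF]
  have hFk : F k = -(2 * γ * t * k ^ 5) := by simp only [hF]; ring
  have hderiv : ∀ b : ℝ, HasDerivAt F
      (4 * (1 - ρ * t) * b ^ 3 - 3 * γ * t * k ^ 2 * b ^ 2 - 2 * (2 - ρ * t) * k ^ 2 * b
        - k ^ 4 * γ * t) b := by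
    intro b
    have h : HasDerivAt (fun x : ℝ => (1 - ρ * t) * x ^ 4 - (2 - ρ * t + x * γ * t) * k ^ 2 * x ^ 2
        + k ^ 4 * (1 - x * γ * t))
        ((1 - ρ * t) * (4 * b ^ 3) - ((γ * t) * k ^ 2 * b ^ 2 + (2 - ρ * t + b * γ * t) * k ^ 2 * (2 * b))
          + k ^ 4 * (-(γ * t))) b := by
      have h1 : HasDerivAt (fun x : ℝ => x ^ 4) (4 * b ^ 3) b := by
        simpa using hasDerivAt_pow 4 b
      have h2 : HasDerivAt (fun x : ℝ => x ^ 2) (2 * b) b := by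
        simpa using hasDerivAt_pow 2 b
      have h3 : HasDerivAt (fun x : ℝ => 2 - ρ * t + x * γ * t) (γ * t) b := by
        simpa using (((hasDerivAt_id b).mul_const γ).mul_const t).const_add (2 - ρ * t)
      have h4 : HasDerivAt (fun x : ℝ => (2 - ρ * t + x * γ * t) * k ^ 2) (γ * t * k ^ 2) b :=
        h3.mul_const _
      have h5 := (h4.mul h2)
      have h6 : HasDerivAt (fun x : ℝ => 1 - x * γ * t) (-(γ * t)) b := by
        simpa using (((hasDerivAt_id b).mul_const γ).mul_const t).const_sub 1
      exact ((h1.const_mul _).sub h5).add (h6.const_mul (k ^ 4))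
    convert h using 1
    ring
  have hanti : StrictAntiOn F (Set.Icc 0 k) := by
    apply strictAntiOn_of_deriv_neg (convex_Icc 0 k) hcont.continuousOn
    intro b hb
    rw [interior_Icc] at hb
    rw [(hderiv b).deriv]
    obtain ⟨hb0, hbk⟩ := hb
    have h1 : 0 ≤ b * (k ^ 2 - b ^ 2) * (1 - ρ * t) := by
      apply mul_nonneg (mul_nonneg hb0.le (by nlinarith)) (by linarith)
    nlinarith [mul_pos hb0 (mul_pos hρ ht), mul_pos hk hk,
      mul_pos (mul_pos ht hγ) (mul_pos (mul_pos hk hk) (mul_pos hk hk)),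
      mul_pos (mul_pos ht hγ) (mul_pos (mul_pos hk hk) (mul_pos hb0 hb0)),
      mul_pos (mul_pos hb0 (mul_pos hρ ht)) (mul_pos hk hk)]
  have hFkneg : F k < 0 := by rw [hFk]; nlinarith [mul_pos (mul_pos ht hγ) (pow_pos hk 5)]
  have hF0pos : 0 < F 0 := by rw [hF0]; positivity
  have hivt : (0 : ℝ) ∈ F '' Set.Icc 0 k := by
    apply intermediate_value_Icc' hk.le hcont.continuousOn
    exact ⟨hFkneg.le, hF0pos.le⟩
  obtain ⟨β, hβmem, hβ⟩ := hivt
  have hβne0 : β ≠ 0 := by rintro rfl; rw [hβ] at hF0pos; exact lt_irrefl _ hF0pos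
  have hβIoc : β ∈ Set.Ioc 0 k := ⟨lt_of_le_of_ne hβmem.1 (Ne.symm hβne0), hβmem.2⟩
  refine ⟨β, hβIoc, hβ, ?_⟩
  intro b hb hbroot
  have hbIcc : b ∈ Set.Icc 0 k := ⟨hb.1.le, hb.2⟩
  have hFb : F b = 0 := by simpa [hF] using hbroot
  by_contra hne
  rcases lt_or_gt_of_ne hne with h | h
  · have := hanti hbIcc hβmem h
    rw [hβ, hFb] at this; exact lt_irrefl _ this
  · have := hanti hβmem hbIcc h
    rw [hβ, hFb] at this; exact lt_irrefl _ this

private lemma stmt5_half (k γ ρ t β : ℝ) (hk : 0 < k) (hγ : 0 < γ) (hρ : 0 < ρ) (ht : 0 < t)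
    (hβ0 : 0 < β) (hβk : β ≤ k)
    (h1 : (k - β)^2 * (k + β)^2
      = t * (β * γ * k^2 * (β^2 + k^2) - ρ * β^2 * (k^2 - β^2)))
    (h16 : 16 * γ * k * t < 1) :
    k / 2 < β := by
  by_contra h
  push_neg at h
  have hb : β * (β^2 + k^2) ≤ 2 * k^3 := by nlinarith [sq_nonneg (k - β), sq_nonneg (k + β)]
  have hG : β * γ * k^2 * (β^2 + k^2) - ρ * β^2 * (k^2 - β^2) ≤ 2 * γ * k^5 := by
    have h2 := mul_le_mul_of_nonneg_left hb (by positivity : (0:ℝ) ≤ γ * k^2)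
    nlinarith [mul_nonneg (mul_nonneg hρ.le (sq_nonneg β)) (mul_nonneg (sub_nonneg.mpr hβk) (by positivity : (0:ℝ) ≤ k + β))]
  have ha : k^2/4 ≤ (k-β)^2 := by nlinarith
  have hb2 : k^2 ≤ (k+β)^2 := by nlinarith
  have hprod : k^2/4 * k^2 ≤ (k-β)^2 * (k+β)^2 :=
    mul_le_mul ha hb2 (by positivity) (sq_nonneg _)
  have h3 := mul_le_mul_of_nonneg_left hG ht.le
  nlinarith [mul_lt_mul_of_pos_right h16 (pow_pos hk 4)]

private lemma stmt5_delta (k γ ρ t β u : ℝ) (hk : 0 < k) (hγ : 0 < γ) (hρ : 0 < ρ) (ht : 0 < t)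
    (hβ0 : 0 < β) (hβk : β ≤ k) (hβh : k / 2 < β)
    (h1 : (k - β)^2 * (k + β)^2
      = t * (β * γ * k^2 * (β^2 + k^2) - ρ * β^2 * (k^2 - β^2)))
    (hu0 : 0 < u) (hu2 : u^2 = γ * k^3 * t / 2) :
    k - β ≤ 4/3 * u ∧ |k - β - u| ≤ 8 * (4*γ*k^4 + 4*ρ*k^3) / (27 * k^2) * t := by
  have hb : β * (β^2 + k^2) ≤ 2 * k^3 := by nlinarith [sq_nonneg (k - β), sq_nonneg (k + β)]
  have hG : β * γ * k^2 * (β^2 + k^2) - ρ * β^2 * (k^2 - β^2) ≤ 2 * γ * k^5 := by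
    have h2 := mul_le_mul_of_nonneg_left hb (by positivity : (0:ℝ) ≤ γ * k^2)
    nlinarith [mul_nonneg (mul_nonneg hρ.le (sq_nonneg β)) (mul_nonneg (sub_nonneg.mpr hβk) (by positivity : (0:ℝ) ≤ k + β))]
  have h3 := mul_le_mul_of_nonneg_left hG ht.le
  have hsq : (k - β)^2 * (9/4 * k^2) ≤ 4 * k^2 * u^2 := by
    have h4 : (k - β)^2 * (9/4 * k^2) ≤ (k - β)^2 * (k + β)^2 := by
      have : 9/4 * k^2 ≤ (k + β)^2 := by nlinarith
      exact mul_le_mul_of_nonneg_left this (sq_nonneg _)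
    nlinarith
  have hδ2 : (k - β)^2 ≤ 16/9 * u^2 := by nlinarith [mul_pos hk hk]
  have hδub : k - β ≤ 4/3 * u := by
    nlinarith [hδ2, mul_pos hu0 hu0, sub_nonneg.mpr hβk]
  refine ⟨hδub, ?_⟩
  have hkey : (k - β - u) * ((k - β + u) * (2 * (k + β)^2))
      = t * (2 * (β * γ * k^2 * (β^2 + k^2) - ρ * β^2 * (k^2 - β^2)) - γ * k^3 * (k + β)^2) := by
    linear_combination 2*h1 - 2*(k+β)^2*hu2
  have hP : |2 * (β * γ * k^2 * (β^2 + k^2) - ρ * β^2 * (k^2 - β^2)) - γ * k^3 * (k + β)^2|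
      ≤ (4*γ*k^4 + 4*ρ*k^3) * (k - β) := by
    have hPeq : 2 * (β * γ * k^2 * (β^2 + k^2) - ρ * β^2 * (k^2 - β^2)) - γ * k^3 * (k + β)^2
        = -((k - β) * (γ * k^2 * (2*β^2 + k*β + k^2) + 2*ρ*β^2*(k + β))) := by ring
    rw [hPeq, abs_neg, abs_of_nonneg (mul_nonneg (sub_nonneg.mpr hβk) (by positivity))]
    have hin : γ * k^2 * (2*β^2 + k*β + k^2) + 2*ρ*β^2*(k + β) ≤ 4*γ*k^4 + 4*ρ*k^3 := by
      have i1 : 0 ≤ γ * k^2 * (3*k^2 - 2*β^2 - k*β) := by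
        apply mul_nonneg (by positivity); nlinarith
      have i2 : 0 ≤ ρ * ((k^2 - β^2) * (k + β)) := by
        apply mul_nonneg hρ.le
        apply mul_nonneg (by nlinarith) (by linarith)
      have i3 : 0 ≤ ρ * (k^2 * (k - β)) :=
        mul_nonneg hρ.le (mul_nonneg (sq_nonneg k) (by linarith))
      nlinarith [i1, i2, i3]
    calc (k - β) * (γ * k^2 * (2*β^2 + k*β + k^2) + 2*ρ*β^2*(k + β))
        ≤ (k - β) * (4*γ*k^4 + 4*ρ*k^3) := by
          exact mul_le_mul_of_nonneg_left hin (sub_nonneg.mpr hβk)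
      _ = (4*γ*k^4 + 4*ρ*k^3) * (k - β) := by ring
  have hpos : 0 < (k - β + u) * (2 * (k + β)^2) := by
    apply mul_pos (by linarith [sub_nonneg.mpr hβk]) (by positivity)
  have habs : |k - β - u| * ((k - β + u) * (2 * (k + β)^2))
      = t * |2 * (β * γ * k^2 * (β^2 + k^2) - ρ * β^2 * (k^2 - β^2)) - γ * k^3 * (k + β)^2| := by
    rw [← abs_of_pos hpos, ← abs_mul, hkey, abs_mul, abs_of_pos ht]
  have hchain : |k - β - u| * (9/2 * k^2 * u) ≤ t * ((4*γ*k^4 + 4*ρ*k^3) * (4/3 * u)) := by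
    have hlow : 9/2 * k^2 * u ≤ (k - β + u) * (2 * (k + β)^2) := by
      have i1 : 0 ≤ (k - β) * (2 * (k + β)^2) := mul_nonneg (sub_nonneg.mpr hβk) (by positivity)
      have i2 : 0 ≤ u * ((k + β)^2 - 9/4 * k^2) := mul_nonneg hu0.le (by nlinarith)
      nlinarith [i1, i2]
    calc |k - β - u| * (9/2 * k^2 * u)
        ≤ |k - β - u| * ((k - β + u) * (2 * (k + β)^2)) :=
          mul_le_mul_of_nonneg_left hlow (abs_nonneg _)
      _ = t * |2 * (β * γ * k^2 * (β^2 + k^2) - ρ * β^2 * (k^2 - β^2)) - γ * k^3 * (k + β)^2| := habs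
      _ ≤ t * ((4*γ*k^4 + 4*ρ*k^3) * (4/3 * u)) := by
          apply mul_le_mul_of_nonneg_left _ ht.le
          calc |2 * (β * γ * k^2 * (β^2 + k^2) - ρ * β^2 * (k^2 - β^2)) - γ * k^3 * (k + β)^2|
              ≤ (4*γ*k^4 + 4*ρ*k^3) * (k - β) := hP
            _ ≤ (4*γ*k^4 + 4*ρ*k^3) * (4/3 * u) :=
                mul_le_mul_of_nonneg_left hδub (by positivity)
  rw [div_mul_eq_mul_div, le_div_iff₀ (by positivity : (0:ℝ) < 27 * k^2)]
  nlinarith [hchain, hu0, abs_nonneg (k - β - u)]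

private lemma stmt5_estA (k γ ρ t β u C₁ : ℝ) (hk : 0 < k) (hγ : 0 < γ) (hρ : 0 < ρ) (ht : 0 < t)
    (hβ0 : 0 < β) (hβk : β ≤ k) (hβh : k / 2 < β)
    (hu0 : 0 < u) (hu2 : u^2 = γ * k^3 * t / 2)
    (hC10 : 0 ≤ C₁) (hC1 : |k - β - u| ≤ C₁ * t)
    (hδub : k - β ≤ 4/3 * u) (hδlb : u/2 ≤ k - β) :
    |γ * t * β^3 * k^2 / (k^4 - (1 - ρ*t) * β^4) - u / (2*k)|
      ≤ (4*k^3*C₁ + 6*γ*k^5 + ρ*k^4) / k^4 * t := by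
  obtain ⟨hC1a, hC1b⟩ := abs_le.mp hC1
  have hδ0 : 0 ≤ k - β := by linarith
  have hδ2 : (k - β)^2 ≤ 16/9 * u^2 := by nlinarith
  set Dn := k^4 - (1 - ρ*t) * β^4 with hDn
  have hDneq : Dn = (k - β) * ((k + β) * (k^2 + β^2)) + ρ*t*β^4 := by rw [hDn]; ring
  have hDnlb : 15/16 * k^3 * u ≤ Dn := by
    have e1 : (3/2*k) * (5/4*k^2) ≤ (k + β) * (k^2 + β^2) := by
      apply mul_le_mul (by linarith) (by nlinarith) (by positivity) (by linarith)
    have e2 : u/2 * ((3/2*k) * (5/4*k^2)) ≤ (k - β) * ((k + β) * (k^2 + β^2)) := by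
      apply mul_le_mul hδlb e1 (by positivity) hδ0
    have e3 : (0:ℝ) ≤ ρ*t*β^4 := by positivity
    linarith [e2, e3, hDneq.ge, hDneq.le]
  have hDnpos : 0 < Dn := by
    nlinarith [hDnlb, mul_pos (mul_pos hk (mul_pos hk hk)) hu0]
  set M₁ := 4*k^3*C₁ + 6*γ*k^5 + ρ*k^4 with hM₁
  have hM₁0 : 0 ≤ M₁ := by rw [hM₁]; positivity
  set cA := M₁ / k^4 with hcAdef
  have hcA : cA * k^4 = M₁ := by rw [hcAdef]; field_simp
  have hcA0 : 0 ≤ cA := by rw [hcAdef]; positivity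
  have heq : γ * t * β^3 * k^2 / Dn - u / (2*k) = (2*γ*t*β^3*k^3 - u*Dn) / (2*k*Dn) := by
    field_simp
  rw [heq, abs_div, abs_of_pos (by positivity : (0:ℝ) < 2*k*Dn), div_le_iff₀ (by positivity)]
  have hnum_e : 2*γ*t*β^3*k^3 - u*Dn
      = u * (4*β^3*(u - (k - β)) - (k - β)^2*(3*β^2 + 2*k*β + k^2) - ρ*t*β^4) := by
    linear_combination (-4*β^3)*hu2 - u*hDneq
  have hβ3 : β^3 ≤ k^3 := pow_le_pow_left₀ hβ0.le hβk 3
  have hβ4 : β^4 ≤ k^4 := pow_le_pow_left₀ hβ0.le hβk 4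
  have hinner : |4*β^3*(u - (k - β)) - (k - β)^2*(3*β^2 + 2*k*β + k^2) - ρ*t*β^4| ≤ M₁ * t := by
    have j1 : (k - β)^2*(3*β^2 + 2*k*β + k^2) ≤ 16/9*u^2 * (6*k^2) := by
      apply mul_le_mul hδ2 (by nlinarith) (by nlinarith) (by positivity)
    have j2 : 16/9*u^2 * (6*k^2) ≤ 6*γ*k^5*t := by nlinarith
    have j3 : 4*β^3*(u - (k - β)) ≤ 4*k^3*(C₁*t) := by
      have : u - (k - β) ≤ C₁*t := by linarith
      nlinarith [mul_nonneg (by positivity : (0:ℝ) ≤ 4*β^3) (sub_nonneg.mpr this),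
        mul_nonneg (mul_nonneg hC10 ht.le) (sub_nonneg.mpr hβ3)]
    have j4 : -(4*k^3*(C₁*t)) ≤ 4*β^3*(u - (k - β)) := by
      have h5 : -(C₁*t) ≤ u - (k - β) := by linarith
      nlinarith [mul_nonneg (by positivity : (0:ℝ) ≤ 4*β^3) (sub_nonneg.mpr h5),
        mul_nonneg (mul_nonneg hC10 ht.le) (sub_nonneg.mpr hβ3)]
    have j5 : ρ*t*β^4 ≤ ρ*k^4*t := by nlinarith [mul_nonneg hρ.le ht.le]
    have j6 : (0:ℝ) ≤ ρ*t*β^4 := by positivity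
    have j7 : (0:ℝ) ≤ (k - β)^2*(3*β^2 + 2*k*β + k^2) := by positivity
    have j8 : (0:ℝ) ≤ (6*γ*k^5 + ρ*k^4) * t := by positivity
    have j9 : (0:ℝ) ≤ 4*k^3*C₁*t + ρ*k^4*t :=
      add_nonneg (by positivity) (by positivity)
    rw [abs_le, hM₁]
    constructor
    · linarith [j4, j1, j2, j5]
    · linarith [j3, j6, j7, j8]
  have hnum : |2*γ*t*β^3*k^3 - u*Dn| ≤ u * (M₁ * t) := by
    rw [hnum_e, abs_mul, abs_of_pos hu0]
    exact mul_le_mul_of_nonneg_left hinner hu0.le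
  have hMtu : cA * k^4 * (t*u) = M₁ * (t*u) := by rw [hcA]
  calc |2*γ*t*β^3*k^3 - u*Dn| ≤ u * (M₁ * t) := hnum
    _ ≤ M₁ / k^4 * t * (2*k*Dn) := by
        have P1 : 0 ≤ cA*t*2*k * (Dn - 15/16*k^3*u) :=
          mul_nonneg (by positivity) (sub_nonneg.mpr hDnlb)
        have : M₁ / k^4 * t * (2*k*Dn) = cA*t*2*k*Dn := by rw [← hcAdef]; ring
        rw [this]
        nlinarith [P1, hMtu, mul_nonneg (mul_nonneg hu0.le ht.le) hM₁0, hu0, ht]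

private lemma stmt5_estBC (k γ ρ t β u C₁ : ℝ) (hk : 0 < k) (hγ : 0 < γ) (hρ : 0 < ρ) (ht : 0 < t)
    (hβ0 : 0 < β) (hβk : β ≤ k) (hβh : k / 2 < β)
    (hu0 : 0 < u) (hu2 : u^2 = γ * k^3 * t / 2)
    (hC10 : 0 ≤ C₁) (hC1 : |k - β - u| ≤ C₁ * t)
    (hδub : k - β ≤ 4/3 * u) (hδlb : u/2 ≤ k - β) :
    |(k - β) * (k + β) / (k^2 + β^2) - u / k| ≤ (2*k^2*C₁ + γ*k^4) / k^3 * t ∧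
    |2*k^2*β / (k^2 + β^2) - k| ≤ γ*k^2 * t := by
  obtain ⟨hC1a, hC1b⟩ := abs_le.mp hC1
  have hδ0 : 0 ≤ k - β := by linarith
  have hδ2 : (k - β)^2 ≤ 16/9 * u^2 := by nlinarith
  constructor
  · have heq : (k - β) * (k + β) / (k^2 + β^2) - u / k
        = ((k - β) * (k + β) * k - u * (k^2 + β^2)) / (k * (k^2 + β^2)) := by
      field_simp
    rw [heq, abs_div, abs_of_pos (by positivity : (0:ℝ) < k * (k^2 + β^2)),
      div_le_iff₀ (by positivity)]
    have hnum : |(k - β) * (k + β) * k - u * (k^2 + β^2)| ≤ (2*k^2*C₁ + γ*k^4) * t := by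
      have e : (k - β) * (k + β) * k - u * (k^2 + β^2)
          = (k - β - u) * (k * (k + β)) + u * (β * (k - β)) := by ring
      rw [e]
      have j1 : |(k - β - u) * (k * (k + β))| ≤ C₁*t * (2*k^2) := by
        rw [abs_mul]
        apply mul_le_mul hC1 (by rw [abs_of_pos (by nlinarith)]; nlinarith) (abs_nonneg _)
          (by positivity)
      have j2 : |u * (β * (k - β))| ≤ γ*k^4*t := by
        rw [abs_mul, abs_of_pos hu0, abs_of_nonneg (mul_nonneg hβ0.le hδ0)]
        have : β * (k - β) ≤ k * (4/3*u) := by nlinarith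
        nlinarith [mul_le_mul_of_nonneg_left this hu0.le]
      calc |(k - β - u) * (k * (k + β)) + u * (β * (k - β))|
          ≤ |(k - β - u) * (k * (k + β))| + |u * (β * (k - β))| := abs_add_le _ _
        _ ≤ C₁*t * (2*k^2) + γ*k^4*t := by linarith
        _ = (2*k^2*C₁ + γ*k^4) * t := by ring
    calc |(k - β) * (k + β) * k - u * (k^2 + β^2)| ≤ (2*k^2*C₁ + γ*k^4) * t := hnum
      _ ≤ (2*k^2*C₁ + γ*k^4) / k^3 * t * (k * (k^2 + β^2)) := by
          have h1 : k^3 ≤ k * (k^2 + β^2) := by nlinarith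
          have h2 : (2*k^2*C₁ + γ*k^4) / k^3 * t * k^3 = (2*k^2*C₁ + γ*k^4) * t := by
            field_simp
          nlinarith [mul_le_mul_of_nonneg_left h1 (by positivity : (0:ℝ) ≤ (2*k^2*C₁ + γ*k^4) / k^3 * t)]
  · have heq : 2*k^2*β / (k^2 + β^2) - k = -(k * (k - β)^2) / (k^2 + β^2) := by
      field_simp; ring
    rw [heq, abs_div, abs_neg, abs_of_nonneg (by positivity : (0:ℝ) ≤ k * (k - β)^2),
      abs_of_pos (by positivity : (0:ℝ) < k^2 + β^2), div_le_iff₀ (by positivity)]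
    nlinarith [mul_nonneg (mul_nonneg hγ.le (sq_nonneg k)) (mul_nonneg ht.le (sq_nonneg β)),
      mul_pos hγ (mul_pos (mul_pos hk hk) (mul_pos (mul_pos hk hk) ht))]

private lemma stmt5_estD (k γ ρ t β u C₁ : ℝ) (hk : 0 < k) (hγ : 0 < γ) (hρ : 0 < ρ) (ht : 0 < t)
    (hβ0 : 0 < β) (hβk : β ≤ k) (hβh : k / 2 < β)
    (hu0 : 0 < u) (hu2 : u^2 = γ * k^3 * t / 2)
    (hC10 : 0 ≤ C₁) (hC1 : |k - β - u| ≤ C₁ * t)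
    (hδub : k - β ≤ 4/3 * u) (hδlb : u/2 ≤ k - β) :
    |β^2 * γ * t * k^4 / (k^4 - (1 - ρ*t) * β^4) - u / 2|
      ≤ (4*k^3*C₁ + 2*γ*k^5 + ρ*k^4) / k^3 * t := by
  obtain ⟨hC1a, hC1b⟩ := abs_le.mp hC1
  have hδ0 : 0 ≤ k - β := by linarith
  have hδ2 : (k - β)^2 ≤ 16/9 * u^2 := by nlinarith
  set Dn := k^4 - (1 - ρ*t) * β^4 with hDn
  have hDneq : Dn = (k - β) * ((k + β) * (k^2 + β^2)) + ρ*t*β^4 := by rw [hDn]; ring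
  have hDnlb : 15/16 * k^3 * u ≤ Dn := by
    have e1 : (3/2*k) * (5/4*k^2) ≤ (k + β) * (k^2 + β^2) := by
      apply mul_le_mul (by linarith) (by nlinarith) (by positivity) (by linarith)
    have e2 : u/2 * ((3/2*k) * (5/4*k^2)) ≤ (k - β) * ((k + β) * (k^2 + β^2)) := by
      apply mul_le_mul hδlb e1 (by positivity) hδ0
    have e3 : (0:ℝ) ≤ ρ*t*β^4 := by positivity
    linarith [e2, e3, hDneq.ge, hDneq.le]
  have hDnpos : 0 < Dn := by
    nlinarith [hDnlb, mul_pos (mul_pos hk (mul_pos hk hk)) hu0]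
  set M₄ := 4*k^3*C₁ + 2*γ*k^5 + ρ*k^4 with hM₄
  have hM₄0 : 0 ≤ M₄ := by rw [hM₄]; positivity
  have hβ3 : β^3 ≤ k^3 := pow_le_pow_left₀ hβ0.le hβk 3
  have hβ4 : β^4 ≤ k^4 := pow_le_pow_left₀ hβ0.le hβk 4
  have heq : β^2 * γ * t * k^4 / Dn - u / 2 = (2*β^2*γ*t*k^4 - u*Dn) / (2*Dn) := by
    field_simp
  rw [heq, abs_div, abs_of_pos (by positivity : (0:ℝ) < 2*Dn), div_le_iff₀ (by positivity)]
  have hnum_e : 2*β^2*γ*t*k^4 - u*Dn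
      = u * (4*β^2*k*(u - (k - β)) - (k - β)^2*(-β^2 + 2*k*β + k^2) - ρ*t*β^4) := by
    linear_combination (-4*β^2*k)*hu2 - u*hDneq
  have hinner : |4*β^2*k*(u - (k - β)) - (k - β)^2*(-β^2 + 2*k*β + k^2) - ρ*t*β^4| ≤ M₄ * t := by
    have hq0 : (0:ℝ) ≤ -β^2 + 2*k*β + k^2 := by nlinarith
    have hq2 : -β^2 + 2*k*β + k^2 ≤ 2*k^2 := by nlinarith [sq_nonneg (k - β)]
    have j1 : (k - β)^2*(-β^2 + 2*k*β + k^2) ≤ 16/9*u^2 * (2*k^2) := by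
      apply mul_le_mul hδ2 hq2 hq0 (by positivity)
    have j2 : 16/9*u^2 * (2*k^2) ≤ 2*γ*k^5*t := by nlinarith
    have j3 : 4*β^2*k*(u - (k - β)) ≤ 4*k^3*(C₁*t) := by
      have h6 : u - (k - β) ≤ C₁*t := by linarith
      nlinarith [mul_nonneg (by positivity : (0:ℝ) ≤ 4*β^2*k) (sub_nonneg.mpr h6),
        mul_nonneg (mul_nonneg hC10 ht.le) (sub_nonneg.mpr (by nlinarith : β^2*k ≤ k^3))]
    have j4 : -(4*k^3*(C₁*t)) ≤ 4*β^2*k*(u - (k - β)) := by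
      have h5 : -(C₁*t) ≤ u - (k - β) := by linarith
      nlinarith [mul_nonneg (by positivity : (0:ℝ) ≤ 4*β^2*k) (sub_nonneg.mpr h5),
        mul_nonneg (mul_nonneg hC10 ht.le) (sub_nonneg.mpr (by nlinarith : β^2*k ≤ k^3))]
    have j5 : ρ*t*β^4 ≤ ρ*k^4*t := by nlinarith [mul_nonneg hρ.le ht.le]
    have j6 : (0:ℝ) ≤ ρ*t*β^4 := by positivity
    have j7 : (0:ℝ) ≤ (k - β)^2*(-β^2 + 2*k*β + k^2) := mul_nonneg (sq_nonneg _) hq0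
    have j8 : (0:ℝ) ≤ (2*γ*k^5 + ρ*k^4) * t := by positivity
    rw [abs_le, hM₄]
    constructor
    · linarith [j4, j1, j2, j5]
    · linarith [j3, j6, j7, j8]
  have hnum : |2*β^2*γ*t*k^4 - u*Dn| ≤ u * (M₄ * t) := by
    rw [hnum_e, abs_mul, abs_of_pos hu0]
    exact mul_le_mul_of_nonneg_left hinner hu0.le
  set cD := M₄ / k^3 with hcDdef
  have hcD : cD * k^3 = M₄ := by rw [hcDdef]; field_simp
  have hMtu : cD * k^3 * (t*u) = M₄ * (t*u) := by rw [hcD]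
  calc |2*β^2*γ*t*k^4 - u*Dn| ≤ u * (M₄ * t) := hnum
    _ ≤ M₄ / k^3 * t * (2*Dn) := by
        have P1 : 0 ≤ cD*t*2 * (Dn - 15/16*k^3*u) :=
          mul_nonneg (by positivity) (sub_nonneg.mpr hDnlb)
        have e5 : M₄ / k^3 * t * (2*Dn) = cD*t*2*Dn := by rw [← hcDdef]; ring
        rw [e5]
        nlinarith [P1, hMtu, mul_nonneg (mul_nonneg hu0.le ht.le) hM₄0]

private lemma stmt5_c1t (γ k t u C₁ : ℝ) (hC₁0 : 0 ≤ C₁) (ht : 0 < t) (hu0 : 0 < u)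
    (hu2 : u^2 = γ*k^3*t/2) (hε3 : C₁^2 * t ≤ γ*k^3/8) : C₁ * t ≤ u/2 := by
  nlinarith [mul_le_mul_of_nonneg_right hε3 ht.le, mul_nonneg hC₁0 ht.le, hu0, hu2]

/-- for small `Δt > 0`, the value-function coefficients
`C̃ = (1−ρΔt)(β(1−φ)(A+γΔt) + φ(1−λβ))` and `D = (1−ρΔt)Bσ_S²/(2ρ)` satisfy
`C̃ = (3√2/4)γ^{1/2}(σ_K/σ_S)^{1/2}√Δt + O(Δt)` and
`D = σ_Sσ_K/(2ρ) − (√2/8)γ^{1/2}σ_S^{1/2}σ_K^{3/2}√Δt/ρ + O(Δt)`. -/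
theorem stmt5 (σS σK γ ρ : ℝ) (hσS : 0 < σS) (hσK : 0 < σK) (hγ : 0 < γ) (hρ : 0 < ρ) :
    ∃ ε > 0, ∃ C > 0, ∀ Δt : ℝ, 0 < Δt → Δt < ε →
      ∃ β lam φ A B Ctil D : ℝ,
        (β ∈ Set.Ioc 0 (σK / σS) ∧
          0 = (1 - ρ * Δt) * β ^ 4
                - (2 - ρ * Δt + β * γ * Δt) * (σK / σS) ^ 2 * β ^ 2
                + (σK / σS) ^ 4 * (1 - β * γ * Δt)) ∧
        (∀ b : ℝ, b ∈ Set.Ioc 0 (σK / σS) →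
          0 = (1 - ρ * Δt) * b ^ 4
                - (2 - ρ * Δt + b * γ * Δt) * (σK / σS) ^ 2 * b ^ 2
                + (σK / σS) ^ 4 * (1 - b * γ * Δt) → b = β) ∧
        lam = β * σS ^ 2 / (σK ^ 2 + β ^ 2 * σS ^ 2) ∧
        φ = 1 - lam * β / (1 - lam * β) ∧
        A = (1 - ρ * Δt) * (1 - φ) ^ 2 * γ * Δt / (1 - (1 - ρ * Δt) * (1 - φ) ^ 2) ∧
        B = (1 - ρ * Δt) * β * (2 * (1 - lam * β) - β * (A + γ * Δt)) ∧
        Ctil = (1 - ρ * Δt) * (β * (1 - φ) * (A + γ * Δt) + φ * (1 - lam * β)) ∧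
        D = (1 - ρ * Δt) * B * σS ^ 2 / (2 * ρ) ∧
        |Ctil - 3 * Real.sqrt 2 / 4 * Real.sqrt γ * Real.sqrt (σK / σS) * Real.sqrt Δt|
          ≤ C * Δt ∧
        |D - (σS * σK / (2 * ρ)
              - Real.sqrt 2 / 8 * Real.sqrt γ * Real.sqrt σS * σK ^ ((3 : ℝ) / 2)
                  * Real.sqrt Δt / ρ)|
          ≤ C * Δt := by
  set k := σK / σS with hkdef
  have hk : 0 < k := by positivity
  set C₁ := 8 * (4*γ*k^4 + 4*ρ*k^3) / (27 * k^2) with hC₁def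
  have hC₁pos : 0 < C₁ := by rw [hC₁def]; positivity
  set cA := (4*k^3*C₁ + 6*γ*k^5 + ρ*k^4) / k^4 with hcAdef
  set cB := (2*k^2*C₁ + γ*k^4) / k^3 with hcBdef
  set cD := (4*k^3*C₁ + 2*γ*k^5 + ρ*k^4) / k^3 with hcDdef
  have hcA0 : 0 ≤ cA := by rw [hcAdef]; positivity
  have hcB0 : 0 ≤ cB := by rw [hcBdef]; positivity
  have hcD0 : 0 ≤ cD := by rw [hcDdef]; positivity
  refine ⟨min (min (1/(2*ρ)) (1/(16*γ*k))) (min (γ*k^3/(8*C₁^2)) (k/(2*(γ*k^2 + cD + 1)))),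
    by positivity, (cA + cB + 2*ρ) + σS^2 * (γ*k^2 + cD + 2*ρ*k) / (2*ρ) + 1, by positivity,
    ?_⟩
  intro t ht htε
  have hε1 : ρ * t < 1/2 := by
    have := lt_of_lt_of_le htε (le_trans (min_le_left _ _) (min_le_left _ _))
    rw [lt_div_iff₀ (by positivity)] at this
    nlinarith
  have hε2 : 16 * γ * k * t < 1 := by
    have := lt_of_lt_of_le htε (le_trans (min_le_left _ _) (min_le_right _ _))
    rw [lt_div_iff₀ (by positivity)] at this
    nlinarith
  have hε3 : C₁^2 * t ≤ γ*k^3/8 := by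
    have h := lt_of_lt_of_le htε (le_trans (min_le_right _ _) (min_le_left _ _))
    rw [lt_div_iff₀ (by positivity)] at h
    nlinarith [sq_nonneg C₁]
  have hε4 : (γ*k^2 + cD) * t ≤ k/2 := by
    have h := lt_of_lt_of_le htε (le_trans (min_le_right _ _) (min_le_right _ _))
    rw [lt_div_iff₀ (by positivity)] at h
    nlinarith
  -- the root
  obtain ⟨β, hβIoc, hroot, huniq⟩ := stmt5_root_exu k γ ρ t hk hγ hρ ht (by linarith)
  obtain ⟨hβ0, hβk⟩ := hβIoc
  -- the sqrt scale
  set u := Real.sqrt (γ*k^3*t/2) with hudef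
  have hu0 : 0 < u := Real.sqrt_pos.mpr (by positivity)
  have hu2 : u^2 = γ*k^3*t/2 := Real.sq_sqrt (by positivity)
  have h1 : (k - β)^2 * (k + β)^2
      = t * (β * γ * k^2 * (β^2 + k^2) - ρ * β^2 * (k^2 - β^2)) := by
    linear_combination hroot
  have hβh : k/2 < β := stmt5_half k γ ρ t β hk hγ hρ ht hβ0 hβk h1 hε2
  obtain ⟨hδub, hC1⟩ := stmt5_delta k γ ρ t β u hk hγ hρ ht hβ0 hβk hβh h1 hu0 hu2
  rw [← hC₁def] at hC1
  have hC1t : C₁ * t ≤ u/2 := stmt5_c1t γ k t u C₁ hC₁pos.le ht hu0 hu2 hε3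
  have hδlb : u/2 ≤ k - β := by
    have := (abs_le.mp hC1).1
    linarith
  have hδ0 : 0 ≤ k - β := by linarith
  have huk : u ≤ k := by linarith
  -- estimates
  have hA' := stmt5_estA k γ ρ t β u C₁ hk hγ hρ ht hβ0 hβk hβh hu0 hu2 hC₁pos.le hC1 hδub hδlb
  obtain ⟨hB', hC'⟩ := stmt5_estBC k γ ρ t β u C₁ hk hγ hρ ht hβ0 hβk hβh hu0 hu2 hC₁pos.le hC1 hδub hδlb
  have hD' := stmt5_estD k γ ρ t β u C₁ hk hγ hρ ht hβ0 hβk hβh hu0 hu2 hC₁pos.le hC1 hδub hδlb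
  rw [← hcAdef] at hA'
  rw [← hcBdef] at hB'
  rw [← hcDdef] at hD'
  -- the defined quantities
  obtain ⟨lam, hlam⟩ : ∃ x : ℝ, x = β * σS^2 / (σK^2 + β^2*σS^2) := ⟨_, rfl⟩
  obtain ⟨φ, hφ⟩ : ∃ x : ℝ, x = 1 - lam * β / (1 - lam * β) := ⟨_, rfl⟩
  obtain ⟨A, hA⟩ : ∃ x : ℝ, x = (1 - ρ*t) * (1 - φ)^2 * γ * t / (1 - (1 - ρ*t) * (1 - φ)^2) :=
    ⟨_, rfl⟩
  obtain ⟨B, hB⟩ : ∃ x : ℝ, x = (1 - ρ*t) * β * (2 * (1 - lam * β) - β * (A + γ*t)) := ⟨_, rfl⟩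
  obtain ⟨Ctil, hCtil⟩ : ∃ x : ℝ,
      x = (1 - ρ*t) * (β * (1 - φ) * (A + γ*t) + φ * (1 - lam * β)) := ⟨_, rfl⟩
  obtain ⟨D, hD⟩ : ∃ x : ℝ, x = (1 - ρ*t) * B * σS^2 / (2*ρ) := ⟨_, rfl⟩
  -- rational forms (as in the algebra lemma)
  have hσKk : σK = k * σS := by rw [hkdef]; field_simp
  have hkβ : (0:ℝ) < k^2 + β^2 := by positivity
  have hDnpos : 0 < k^4 - (1 - ρ*t) * β^4 := by
    have e0 : k^4 - (1 - ρ*t) * β^4 = (k - β) * ((k + β) * (k^2 + β^2)) + ρ*t*β^4 := by ring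
    rw [e0]
    have e1 : 0 < (k - β) * ((k + β) * (k^2 + β^2)) :=
      mul_pos (by linarith) (by positivity)
    have e2 : (0:ℝ) ≤ ρ*t*β^4 := by positivity
    linarith
  have hDn0 : k^4 - (1 - ρ*t) * β^4 ≠ 0 := ne_of_gt hDnpos
  have hlb : lam * β = β^2 / (k^2 + β^2) := by
    rw [hlam, hσKk]; field_simp
  have hs : 1 - lam * β = k^2 / (k^2 + β^2) := by rw [hlb]; field_simp; ring
  have hphi : φ = (k^2 - β^2) / k^2 := by
    have hne : (1:ℝ) - β^2/(k^2+β^2) ≠ 0 := by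
      have : (1:ℝ) - β^2/(k^2+β^2) = k^2/(k^2+β^2) := by field_simp; ring
      rw [this]; positivity
    rw [hφ, hlb]
    field_simp
    ring
  have h1phi : 1 - φ = β^2 / k^2 := by rw [hphi]; field_simp; ring
  have hden : 1 - (1 - ρ*t) * (β^2/k^2)^2 = (k^4 - (1 - ρ*t) * β^4) / k^4 := by
    field_simp
  have hAval : A = (1 - ρ*t) * β^4 * γ * t / (k^4 - (1 - ρ*t) * β^4) := by
    rw [hA, h1phi, hden, div_div_eq_mul_div]
    field_simp
  have hAγ : A + γ*t = γ*t*k^4 / (k^4 - (1 - ρ*t) * β^4) := by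
    rw [hAval]
    field_simp
    ring
  have hCtilEq : Ctil = (1 - ρ*t) * (γ*t*β^3*k^2 / (k^4 - (1 - ρ*t)*β^4)
      + (k - β) * (k + β) / (k^2 + β^2)) := by
    rw [hCtil, h1phi, hphi, hs, hAγ]
    field_simp
    ring
  have hDEq : D = σS^2 * ((1 - ρ*t)^2 * (2*k^2*β / (k^2 + β^2)
      - β^2*γ*t*k^4 / (k^4 - (1 - ρ*t)*β^4))) / (2*ρ) := by
    rw [hD, hB, hs, hAγ]
    field_simp
  -- target identities
  have e1 : Real.sqrt γ ^ 2 = γ := Real.sq_sqrt hγ.le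
  have e2 : Real.sqrt k ^ 2 = k := Real.sq_sqrt hk.le
  have e3 : Real.sqrt t ^ 2 = t := Real.sq_sqrt ht.le
  have e4 : Real.sqrt 2 ^ 2 = 2 := Real.sq_sqrt (by norm_num)
  have hsq : γ*k^3*t/2 = (Real.sqrt γ * (k*Real.sqrt k) * Real.sqrt t * (Real.sqrt 2/2))^2 := by
    linear_combination (-(k^2*Real.sqrt k^2*Real.sqrt t^2*Real.sqrt 2^2/4))*e1
      + (-(γ*k^2*Real.sqrt t^2*Real.sqrt 2^2/4))*e2 + (-(γ*k^3*Real.sqrt 2^2/4))*e3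
      + (-(γ*k^3*t/4))*e4
  have hu_eq : u = Real.sqrt γ * (k*Real.sqrt k) * Real.sqrt t * (Real.sqrt 2/2) := by
    rw [hudef, hsq, Real.sqrt_sq (by positivity)]
  have hTc : 3 * Real.sqrt 2 / 4 * Real.sqrt γ * Real.sqrt k * Real.sqrt t
      = 3/(2*k) * u := by
    rw [hu_eq]; field_simp; ring
  have hTd2 : Real.sqrt 2 / 8 * Real.sqrt γ * Real.sqrt σS * σK ^ ((3:ℝ)/2) * Real.sqrt t / ρ
      = σS^2 * u / (4*ρ) := by
    rw [hu_eq]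
    have hrpow : σK ^ ((3:ℝ)/2) = σK * Real.sqrt σK := by
      rw [show (3:ℝ)/2 = 1 + 1/2 by norm_num, Real.rpow_add hσK, Real.rpow_one,
        ← Real.sqrt_eq_rpow]
    rw [hrpow]
    have hsk : Real.sqrt k = Real.sqrt σK / Real.sqrt σS := by
      rw [hkdef, Real.sqrt_div hσK.le]
    rw [hsk]
    have hs2 : Real.sqrt σS ≠ 0 := by positivity
    have e5 : Real.sqrt σS ^ 2 = σS := Real.sq_sqrt hσS.le
    rw [hkdef]
    field_simp
    linear_combination 8 * e5
  have hTd1 : σS * σK / (2*ρ) = σS^2 * k / (2*ρ) := by rw [hkdef]; field_simp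
  -- assemble
  refine ⟨β, lam, φ, A, B, Ctil, D, ⟨⟨hβ0, hβk⟩, hroot.symm⟩,
    fun b hb he => huniq b hb he.symm, hlam, hφ, hA, hB, hCtil, hD, ?_, ?_⟩
  · -- Ctil bound
    rw [hTc, hCtilEq]
    have hw0 : (0:ℝ) < 1 - ρ*t := by linarith
    have hw1 : |1 - ρ*t| ≤ 1 := by rw [abs_of_pos hw0]; linarith [mul_pos hρ ht]
    have e : (1 - ρ*t) * (γ*t*β^3*k^2 / (k^4 - (1 - ρ*t)*β^4)
          + (k - β) * (k + β) / (k^2 + β^2)) - 3/(2*k) * u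
        = (1 - ρ*t) * (γ*t*β^3*k^2 / (k^4 - (1 - ρ*t)*β^4) - u/(2*k))
          + (1 - ρ*t) * ((k - β) * (k + β) / (k^2 + β^2) - u/k)
          - ρ*t*(3/(2*k)*u) := by ring
    rw [e]
    set X := (1 - ρ*t) * (γ*t*β^3*k^2 / (k^4 - (1 - ρ*t)*β^4) - u/(2*k)) with hX
    set Y := (1 - ρ*t) * ((k - β) * (k + β) / (k^2 + β^2) - u/k) with hY
    set Z := ρ*t*(3/(2*k)*u) with hZ
    have j1 : |X| ≤ cA * t := by
      rw [hX, abs_mul]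
      calc |1 - ρ*t| * |γ*t*β^3*k^2 / (k^4 - (1 - ρ*t)*β^4) - u/(2*k)|
          ≤ 1 * (cA * t) := mul_le_mul hw1 hA' (abs_nonneg _) zero_le_one
        _ = cA * t := by ring
    have j2 : |Y| ≤ cB * t := by
      rw [hY, abs_mul]
      calc |1 - ρ*t| * |(k - β) * (k + β) / (k^2 + β^2) - u/k|
          ≤ 1 * (cB * t) := mul_le_mul hw1 hB' (abs_nonneg _) zero_le_one
        _ = cB * t := by ring
    have j3 : |Z| ≤ 2*ρ*t := by
      rw [hZ, abs_of_nonneg (by positivity)]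
      have hx : 3/(2*k)*u ≤ 2 := by
        rw [div_mul_eq_mul_div, div_le_iff₀ (by positivity)]
        linarith [huk, hk]
      calc ρ*t*(3/(2*k)*u) ≤ ρ*t*2 :=
            mul_le_mul_of_nonneg_left hx (by positivity)
        _ = 2*ρ*t := by ring
    calc |X + Y - Z| ≤ |X + Y| + |Z| := abs_sub _ _
      _ ≤ |X| + |Y| + |Z| := by linarith [abs_add_le X Y]
      _ ≤ cA * t + cB * t + 2*ρ*t := by linarith
      _ = (cA + cB + 2*ρ) * t := by ring
      _ ≤ ((cA + cB + 2*ρ) + σS^2 * (γ*k^2 + cD + 2*ρ*k) / (2*ρ) + 1) * t := by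
          apply mul_le_mul_of_nonneg_right _ ht.le
          have : (0:ℝ) ≤ σS^2 * (γ*k^2 + cD + 2*ρ*k) / (2*ρ) := by positivity
          linarith
  · -- D bound
    rw [hTd1, hTd2, hDEq]
    have hw0 : (0:ℝ) < 1 - ρ*t := by linarith
    have e : σS^2 * ((1 - ρ*t)^2 * (2*k^2*β / (k^2 + β^2)
          - β^2*γ*t*k^4 / (k^4 - (1 - ρ*t)*β^4))) / (2*ρ) - (σS^2 * k / (2*ρ) - σS^2 * u / (4*ρ))
        = σS^2/(2*ρ) * ((1 - ρ*t)^2 * (2*k^2*β / (k^2 + β^2) - k)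
          - (1 - ρ*t)^2 * (β^2*γ*t*k^4 / (k^4 - (1 - ρ*t)*β^4) - u/2)
          + ((1 - ρ*t)^2 - 1) * (k - u/2)) := by
      field_simp
      ring
    rw [e, abs_mul, abs_of_pos (by positivity : (0:ℝ) < σS^2/(2*ρ))]
    set X := (1 - ρ*t)^2 * (2*k^2*β / (k^2 + β^2) - k) with hX
    set Y := (1 - ρ*t)^2 * (β^2*γ*t*k^4 / (k^4 - (1 - ρ*t)*β^4) - u/2) with hY
    set Z := ((1 - ρ*t)^2 - 1) * (k - u/2) with hZ
    have hw2 : |(1 - ρ*t)^2| ≤ 1 := by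
      rw [abs_of_pos (by positivity)]
      have e0 : (1 - ρ*t)^2 = 1 - ρ*t*(2 - ρ*t) := by ring
      have e1 : 0 ≤ ρ*t*(2 - ρ*t) := mul_nonneg (by positivity) (by linarith)
      linarith [e0.le, e0.ge]
    have j1 : |X| ≤ γ*k^2 * t := by
      rw [hX, abs_mul]
      calc |(1 - ρ*t)^2| * |2*k^2*β / (k^2 + β^2) - k|
          ≤ 1 * (γ*k^2 * t) := mul_le_mul hw2 hC' (abs_nonneg _) zero_le_one
        _ = γ*k^2 * t := by ring
    have j2 : |Y| ≤ cD * t := by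
      rw [hY, abs_mul]
      calc |(1 - ρ*t)^2| * |β^2*γ*t*k^4 / (k^4 - (1 - ρ*t)*β^4) - u/2|
          ≤ 1 * (cD * t) := mul_le_mul hw2 hD' (abs_nonneg _) zero_le_one
        _ = cD * t := by ring
    have j3 : |Z| ≤ 2*ρ*t*k := by
      rw [hZ, abs_mul]
      have ja : |(1 - ρ*t)^2 - 1| ≤ 2*ρ*t := by
        have e0 : (1 - ρ*t)^2 - 1 = ρ*t*(ρ*t - 2) := by ring
        rw [e0, abs_le]
        have e1 : ρ*t*(ρ*t - 2) ≤ 0 :=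
          mul_nonpos_of_nonneg_of_nonpos (by positivity) (by linarith)
        have e2 : 0 ≤ ρ*t*(ρ*t) := by positivity
        constructor <;> linarith
      have jb : |k - u/2| ≤ k := by
        rw [abs_le]
        constructor <;> linarith
      calc |(1 - ρ*t)^2 - 1| * |k - u/2| ≤ (2*ρ*t) * k := by
            apply mul_le_mul ja jb (abs_nonneg _) (by positivity)
        _ = 2*ρ*t*k := by ring
    have hsum : |X - Y + Z| ≤ (γ*k^2 + cD + 2*ρ*k) * t := by
      calc |X - Y + Z| ≤ |X - Y| + |Z| := abs_add_le _ _
        _ ≤ |X| + |Y| + |Z| := by linarith [abs_sub X Y]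
        _ ≤ γ*k^2 * t + cD * t + 2*ρ*t*k := by linarith
        _ = (γ*k^2 + cD + 2*ρ*k) * t := by ring
    calc σS^2/(2*ρ) * |X - Y + Z|
        ≤ σS^2/(2*ρ) * ((γ*k^2 + cD + 2*ρ*k) * t) :=
          mul_le_mul_of_nonneg_left hsum (by positivity)
      _ = (σS^2 * (γ*k^2 + cD + 2*ρ*k) / (2*ρ)) * t := by ring
      _ ≤ ((cA + cB + 2*ρ) + σS^2 * (γ*k^2 + cD + 2*ρ*k) / (2*ρ) + 1) * t := by
          apply mul_le_mul_of_nonneg_right _ ht.le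
          linarith [hρ.le, hcA0, hcB0]
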